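/- Let a₁, a₂, b₁, b₂, c₁, c₂, m₁, m₂ be positive reals, m₃ ≥ 0, α > 0, β a nonzero real, with a₁ > α²/2; set q := 2a₁/α² − 1, a := 2b₁/α², and λ := −a₂ − β²/2 + (a^q/Γ(q))·∫₀^∞ c₂·x^q·e^{−a·x}/(m₁ + m₂·x) dx. Define h(u,z) := −(a₂ + β²/2 + (β/α)(a₁ − α²/2)) − b₂·e^z·e^{(β/α)u} + (β/α)·b₁·e^u + (c₂·e^u + (β/α)·c₁·e^{z + (β/α)u})/(m₁ + m₂·e^u + m₃·e^{z + (β/α)u}). If λ > 0, then with ū := ln((a₁ − α²/2)/b₁) there exists z̄ ∈ ℝ such that h(ū, z) > 0 for all z ≤ z̄. -/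

import Mathlib

open MeasureTheory Set

private lemma integrableOn_aux {s b : ℝ} (hs : -1 < s) (hb : 0 < b) :
    IntegrableOn (fun x : ℝ => x ^ s * Real.exp (-(b * x))) (Set.Ioi 0) := by
  have h := integrableOn_rpow_mul_exp_neg_mul_rpow (p := 1) hs one_pos hb
  refine h.congr_fun (fun x hx => ?_) measurableSet_Ioi
  beta_reduce
  rw [Real.rpow_one, neg_mul]

set_option maxHeartbeats 1000000 in
/-- first assertion of Lemma 3.1: if the threshold `λ` is positive, then
with `ū = ln((a₁ − α²/2)/b₁)` there exists `z̄` such that the drift `h(ū, z)` of the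
second component of the associated control system is positive for all `z ≤ z̄`. -/
theorem stmt5 (a₁ a₂ b₁ b₂ c₁ c₂ m₁ m₂ m₃ α β : ℝ)
    (ha₁ : 0 < a₁) (ha₂ : 0 < a₂) (hb₁ : 0 < b₁) (hb₂ : 0 < b₂)
    (hc₁ : 0 < c₁) (hc₂ : 0 < c₂) (hm₁ : 0 < m₁) (hm₂ : 0 < m₂) (hm₃ : 0 ≤ m₃)
    (hα : 0 < α) (hβ : β ≠ 0) (ha : a₁ > α ^ 2 / 2) :
    let q : ℝ := 2 * a₁ / α ^ 2 - 1
    let a : ℝ := 2 * b₁ / α ^ 2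
    let lam : ℝ := -a₂ - β ^ 2 / 2 + (a ^ q / Real.Gamma q) *
        ∫ x in Set.Ioi (0 : ℝ), c₂ * x ^ q * Real.exp (-a * x) / (m₁ + m₂ * x)
    let h : ℝ → ℝ → ℝ := fun u z =>
      -(a₂ + β ^ 2 / 2 + (β / α) * (a₁ - α ^ 2 / 2))
        - b₂ * Real.exp z * Real.exp ((β / α) * u)
        + (β / α) * b₁ * Real.exp u
        + (c₂ * Real.exp u + (β / α) * c₁ * Real.exp (z + (β / α) * u))
            / (m₁ + m₂ * Real.exp u + m₃ * Real.exp (z + (β / α) * u))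
    lam > 0 →
      ∃ zbar : ℝ, ∀ z ≤ zbar, h (Real.log ((a₁ - α ^ 2 / 2) / b₁)) z > 0 := by
  intro q a lam h hlam
  have hq0 : q = 2 * a₁ / α ^ 2 - 1 := rfl
  have ha0 : a = 2 * b₁ / α ^ 2 := rfl
  have hlam0 : lam = -a₂ - β ^ 2 / 2 + (a ^ q / Real.Gamma q) *
      ∫ x in Set.Ioi (0 : ℝ), c₂ * x ^ q * Real.exp (-a * x) / (m₁ + m₂ * x) := rfl
  have hh : h = fun u z =>
      -(a₂ + β ^ 2 / 2 + (β / α) * (a₁ - α ^ 2 / 2))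
        - b₂ * Real.exp z * Real.exp ((β / α) * u)
        + (β / α) * b₁ * Real.exp u
        + (c₂ * Real.exp u + (β / α) * c₁ * Real.exp (z + (β / α) * u))
            / (m₁ + m₂ * Real.exp u + m₃ * Real.exp (z + (β / α) * u)) := rfl
  have hα2 : (0 : ℝ) < α ^ 2 := by positivity
  set μ : ℝ := (a₁ - α ^ 2 / 2) / b₁ with hμdef
  have hμ : 0 < μ := by
    rw [hμdef]; apply div_pos (by linarith) hb₁
  have hq : 0 < q := by
    rw [hq0, sub_pos, lt_div_iff₀ hα2]; linarith
  have ha' : 0 < a := by rw [ha0]; positivity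
  have haμ : a * μ = q := by
    rw [ha0, hq0, hμdef]; field_simp
  have hM : (0 : ℝ) < m₁ + m₂ * μ := by positivity
  set A : ℝ := c₂ * m₂ * μ ^ 2 / (m₁ + m₂ * μ) ^ 2 with hA
  set B : ℝ := c₂ * m₁ / (m₁ + m₂ * μ) ^ 2 with hB
  -- pointwise Jensen-type bound
  have hpt : ∀ x ∈ Set.Ioi (0 : ℝ),
      c₂ * x ^ q * Real.exp (-a * x) / (m₁ + m₂ * x)
        ≤ A * (x ^ (q - 1) * Real.exp (-(a * x)))
          + B * (x * (x ^ (q - 1) * Real.exp (-(a * x)))) := by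
    intro x hx
    have hx0 : (0 : ℝ) < x := hx
    have hxq : x ^ q = x ^ (q - 1) * x := by
      have hq1 : q - 1 + 1 = q := by ring
      rw [← Real.rpow_add_one hx0.ne' (q - 1), hq1]
    have hD : (0 : ℝ) < m₁ + m₂ * x := by positivity
    have hEnn : (0 : ℝ) ≤ x ^ (q - 1) * Real.exp (-(a * x)) :=
      mul_nonneg (Real.rpow_nonneg hx0.le _) (Real.exp_pos _).le
    have hcoeff : c₂ * x ≤ (A + B * x) * (m₁ + m₂ * x) := by
      have hid : (A + B * x) * (m₁ + m₂ * x) - c₂ * x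
          = c₂ * m₁ * m₂ * (x - μ) ^ 2 / (m₁ + m₂ * μ) ^ 2 := by
        rw [hA, hB]; field_simp; ring
      nlinarith [div_nonneg (by positivity : (0:ℝ) ≤ c₂ * m₁ * m₂ * (x - μ) ^ 2)
        (by positivity : (0:ℝ) ≤ (m₁ + m₂ * μ) ^ 2), hid]
    rw [neg_mul, hxq, div_le_iff₀ hD]
    calc c₂ * (x ^ (q - 1) * x) * Real.exp (-(a * x))
        = (c₂ * x) * (x ^ (q - 1) * Real.exp (-(a * x))) := by ring
      _ ≤ ((A + B * x) * (m₁ + m₂ * x)) * (x ^ (q - 1) * Real.exp (-(a * x))) :=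
          mul_le_mul_of_nonneg_right hcoeff hEnn
      _ = (A * (x ^ (q - 1) * Real.exp (-(a * x)))
            + B * (x * (x ^ (q - 1) * Real.exp (-(a * x))))) * (m₁ + m₂ * x) := by ring
  -- integrability
  have hint1 : IntegrableOn (fun x : ℝ => x ^ (q - 1) * Real.exp (-(a * x))) (Set.Ioi 0) :=
    integrableOn_aux (by linarith) ha'
  have hint2 : IntegrableOn (fun x : ℝ => x ^ q * Real.exp (-(a * x))) (Set.Ioi 0) :=
    integrableOn_aux (by linarith) ha'
  have heqn : Set.EqOn (fun x : ℝ => x ^ q * Real.exp (-(a * x)))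
      (fun x : ℝ => x * (x ^ (q - 1) * Real.exp (-(a * x)))) (Set.Ioi 0) := by
    intro x hx
    have hx0 : (0 : ℝ) < x := hx
    have hq1 : q - 1 + 1 = q := by ring
    simp only
    rw [← hq1, Real.rpow_add_one hx0.ne']; ring
  have hint2' : IntegrableOn (fun x : ℝ => x * (x ^ (q - 1) * Real.exp (-(a * x)))) (Set.Ioi 0) :=
    hint2.congr_fun heqn measurableSet_Ioi
  -- integral values
  have hI1 : ∫ x in Set.Ioi (0:ℝ), x ^ (q - 1) * Real.exp (-(a * x))
      = (1 / a) ^ q * Real.Gamma q := Real.integral_rpow_mul_exp_neg_mul_Ioi hq ha'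
  have hI2 : ∫ x in Set.Ioi (0:ℝ), x * (x ^ (q - 1) * Real.exp (-(a * x)))
      = (1 / a) ^ (q + 1) * Real.Gamma (q + 1) := by
    rw [← setIntegral_congr_fun measurableSet_Ioi heqn]
    have := Real.integral_rpow_mul_exp_neg_mul_Ioi (by linarith : (0:ℝ) < q + 1) ha'
    simpa using this
  -- comparison of integrals
  have hcmp : (∫ x in Set.Ioi (0:ℝ), c₂ * x ^ q * Real.exp (-a * x) / (m₁ + m₂ * x))
      ≤ ∫ x in Set.Ioi (0:ℝ), (A * (x ^ (q - 1) * Real.exp (-(a * x)))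
          + B * (x * (x ^ (q - 1) * Real.exp (-(a * x))))) := by
    refine integral_mono_of_nonneg ?_ ((hint1.const_mul A).add (hint2'.const_mul B)) ?_
    · rw [Filter.EventuallyLE, ae_restrict_iff' measurableSet_Ioi]
      refine ae_of_all _ fun x hx => ?_
      have hx0 : (0 : ℝ) < x := hx
      have : (0:ℝ) ≤ c₂ * x ^ q * Real.exp (-a * x) :=
        mul_nonneg (mul_nonneg hc₂.le (Real.rpow_nonneg hx0.le _)) (Real.exp_pos _).le
      exact div_nonneg this (by positivity)
    · rw [Filter.EventuallyLE, ae_restrict_iff' measurableSet_Ioi]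
      exact ae_of_all _ hpt
  have hGval : (∫ x in Set.Ioi (0:ℝ), (A * (x ^ (q - 1) * Real.exp (-(a * x)))
      + B * (x * (x ^ (q - 1) * Real.exp (-(a * x))))))
      = A * ((1 / a) ^ q * Real.Gamma q) + B * ((1 / a) ^ (q + 1) * Real.Gamma (q + 1)) := by
    rw [integral_add (hint1.const_mul A) (hint2'.const_mul B),
      integral_const_mul, integral_const_mul, hI1, hI2]
  -- conclude Jensen bound
  have hΓ : 0 < Real.Gamma q := Real.Gamma_pos_of_pos hq
  have hpow : (0:ℝ) < a ^ q := Real.rpow_pos_of_pos ha' q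
  have hposc : 0 < a ^ q / Real.Gamma q := div_pos hpow hΓ
  have e1 : (1 / a : ℝ) ^ q = (a ^ q)⁻¹ := by
    rw [one_div, Real.inv_rpow ha'.le]
  have e2 : (1 / a : ℝ) ^ (q + 1) = (a ^ q)⁻¹ * a⁻¹ := by
    rw [Real.rpow_add (by positivity : (0:ℝ) < 1 / a), Real.rpow_one, e1, one_div]
  have e3 : Real.Gamma (q + 1) = q * Real.Gamma q := Real.Gamma_add_one hq.ne'
  have hval : a ^ q / Real.Gamma q *
      (A * ((1 / a) ^ q * Real.Gamma q) + B * ((1 / a) ^ (q + 1) * Real.Gamma (q + 1)))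
      = c₂ * μ / (m₁ + m₂ * μ) := by
    rw [e1, e2, e3, hA, hB, ← haμ]
    field_simp
    ring
  have hg : a₂ + β ^ 2 / 2 < c₂ * μ / (m₁ + m₂ * μ) := by
    have h1 : a ^ q / Real.Gamma q *
        (∫ x in Set.Ioi (0:ℝ), c₂ * x ^ q * Real.exp (-a * x) / (m₁ + m₂ * x))
        ≤ c₂ * μ / (m₁ + m₂ * μ) := by
      rw [← hval, ← hGval]
      exact mul_le_mul_of_nonneg_left hcmp hposc.le
    rw [hlam0] at hlam
    linarith
  -- continuity part
  set K : ℝ := Real.exp ((β / α) * Real.log μ) with hK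
  have hK0 : 0 < K := Real.exp_pos _
  set F : ℝ → ℝ := fun t =>
    -(a₂ + β ^ 2 / 2 + (β / α) * (a₁ - α ^ 2 / 2))
      - b₂ * (t * K) + (β / α) * b₁ * μ
      + (c₂ * μ + (β / α) * c₁ * (t * K)) / (m₁ + m₂ * μ + m₃ * (t * K)) with hF
  have hbμ : b₁ * μ = a₁ - α ^ 2 / 2 := by
    rw [hμdef]; field_simp
  have hF0 : 0 < F 0 := by
    rw [hF]
    simp only [zero_mul, mul_zero, add_zero, sub_zero]
    have : (β / α) * b₁ * μ = (β / α) * (a₁ - α ^ 2 / 2) := by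
      rw [mul_assoc, hbμ]
    rw [this]
    linarith
  have hcont : ContinuousAt F 0 := by
    rw [hF]
    have hden : (m₁ + m₂ * μ + m₃ * ((0:ℝ) * K)) ≠ 0 := by
      simp only [zero_mul, mul_zero, add_zero]
      positivity
    exact ContinuousAt.add (by fun_prop) (ContinuousAt.div (by fun_prop) (by fun_prop) hden)
  rw [Metric.continuousAt_iff] at hcont
  obtain ⟨δ, hδ, hδ'⟩ := hcont (F 0) hF0
  refine ⟨Real.log (δ / 2), fun z hz => ?_⟩
  have hexp : Real.exp z < δ := by
    calc Real.exp z ≤ Real.exp (Real.log (δ / 2)) := Real.exp_le_exp.2 hz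
      _ = δ / 2 := Real.exp_log (by linarith)
      _ < δ := by linarith
  have hdist : dist (Real.exp z) 0 < δ := by
    rw [Real.dist_eq, sub_zero, abs_of_pos (Real.exp_pos z)]; exact hexp
  have hFz : 0 < F (Real.exp z) := by
    have h2 := hδ' hdist
    rw [Real.dist_eq] at h2
    have := abs_lt.1 h2
    linarith [this.1]
  have heq : h (Real.log μ) z = F (Real.exp z) := by
    rw [hh, hF]
    simp only [Real.exp_add, Real.exp_log hμ]
    ring
  rw [heq]
  exact hFz
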